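/- Let β ∈ ℝ and let Φ : ℝ → ℝ be twice continuously differentiable and satisfy the Kummer-type equation y·Φ''(y) + (2/3 - y)·Φ'(y) + β·Φ(y) = 0 for all y ∈ ℝ. Define F(x,v) = x^β · Φ(v³/(9x)) for x > 0 and v ∈ ℝ. Then F satisfies the stationary kinetic equation v·∂ₓF(x,v) + ∂ᵥᵥF(x,v) = 0 for all x > 0 and v ∈ ℝ. -/

import Mathlib

/-- If `Φ` is `C²` and satisfies the Kummer-type equation
`y·Φ'' + (2/3 - y)·Φ' + β·Φ = 0` on `ℝ`, then `F(x,v) = x^β·Φ(v³/(9x))`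
satisfies the stationary kinetic equation `v·∂ₓF + ∂ᵥᵥF = 0` for `x > 0`. -/
theorem selfSimilar_solves_stationary_kineticFP
    (β : ℝ) (Φ : ℝ → ℝ) (hΦ : ContDiff ℝ 2 Φ)
    (hode : ∀ y : ℝ,
      y * iteratedDeriv 2 Φ y + (2/3 - y) * deriv Φ y + β * Φ y = 0)
    (F : ℝ → ℝ → ℝ)
    (hF : ∀ x v : ℝ, F x v = x ^ β * Φ (v ^ 3 / (9 * x))) :
    ∀ x : ℝ, 0 < x → ∀ v : ℝ,
      v * deriv (fun x' => F x' v) x + iteratedDeriv 2 (fun v' => F x v') v = 0 := by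
  intro x hx v
  have hΦd : Differentiable ℝ Φ := hΦ.differentiable (by norm_num)
  have hΦ' : ContDiff ℝ 1 (deriv Φ) := by
    have h2 : ContDiff ℝ ((1 : WithTop ℕ∞) + 1) Φ := by
      have h21 : ((1 : WithTop ℕ∞) + 1) = 2 := by norm_num
      rw [h21]; exact hΦ
    exact (contDiff_succ_iff_deriv.mp h2).2.2
  have hΦ'd : Differentiable ℝ (deriv Φ) := hΦ'.differentiable (by norm_num)
  have h9x : (9 : ℝ) * x ≠ 0 := by positivity
  have hxne : x ≠ 0 := hx.ne'
  -- derivative in v, at every point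
  have hg : ∀ w : ℝ, HasDerivAt (fun v' : ℝ => v' ^ 3 / (9 * x)) (3 * w ^ 2 / (9 * x)) w := by
    intro w
    simpa using (hasDerivAt_pow 3 w).div_const (9 * x)
  have hd1 : ∀ w : ℝ, HasDerivAt (fun v' => F x v')
      (x ^ β * (deriv Φ (w ^ 3 / (9 * x)) * (3 * w ^ 2 / (9 * x)))) w := by
    intro w
    have h := ((hΦd (w ^ 3 / (9 * x))).hasDerivAt.comp w (hg w)).const_mul (x ^ β)
    simpa [hF, Function.comp, mul_comm, mul_assoc, mul_left_comm] using h
  have hderiv1 : (deriv fun v' => F x v') =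
      fun w => x ^ β * (deriv Φ (w ^ 3 / (9 * x)) * (3 * w ^ 2 / (9 * x))) := by
    funext w; exact (hd1 w).deriv
  -- second derivative in v at v
  have hd2 : HasDerivAt (fun w => x ^ β * (deriv Φ (w ^ 3 / (9 * x)) * (3 * w ^ 2 / (9 * x))))
      (x ^ β * (deriv (deriv Φ) (v ^ 3 / (9 * x)) * (3 * v ^ 2 / (9 * x)) * (3 * v ^ 2 / (9 * x))
        + deriv Φ (v ^ 3 / (9 * x)) * (6 * v / (9 * x)))) v := by
    have h1 : HasDerivAt (fun w : ℝ => deriv Φ (w ^ 3 / (9 * x)))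
        (deriv (deriv Φ) (v ^ 3 / (9 * x)) * (3 * v ^ 2 / (9 * x))) v :=
      by have := (hΦ'd (v ^ 3 / (9 * x))).hasDerivAt.comp v (hg v); exact this
    have h2 : HasDerivAt (fun w : ℝ => 3 * w ^ 2 / (9 * x)) (6 * v / (9 * x)) v := by
      have := ((hasDerivAt_pow 2 v).const_mul 3).div_const (9 * x)
      exact this.congr_deriv (by norm_num; ring)
    exact (h1.mul h2).const_mul (x ^ β)
  have h2nd : iteratedDeriv 2 (fun v' => F x v') v =
      x ^ β * (deriv (deriv Φ) (v ^ 3 / (9 * x)) * (3 * v ^ 2 / (9 * x)) * (3 * v ^ 2 / (9 * x))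
        + deriv Φ (v ^ 3 / (9 * x)) * (6 * v / (9 * x))) := by
    rw [iteratedDeriv_succ, iteratedDeriv_one, hderiv1]
    exact hd2.deriv
  -- derivative in x
  have hrpow : HasDerivAt (fun x' : ℝ => x' ^ β) (β * x ^ (β - 1)) x :=
    Real.hasDerivAt_rpow_const (Or.inl hxne)
  have hinv : HasDerivAt (fun x' : ℝ => v ^ 3 / (9 * x'))
      (v ^ 3 * (-(9) / (9 * x) ^ 2)) x := by
    have h9 : HasDerivAt (fun x' : ℝ => 9 * x') 9 x := by
      simpa using (hasDerivAt_id x).const_mul (9 : ℝ)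
    have := (h9.inv h9x).const_mul (v ^ 3)
    simpa [div_eq_mul_inv] using this
  have hxd : HasDerivAt (fun x' => F x' v)
      (β * x ^ (β - 1) * Φ (v ^ 3 / (9 * x))
        + x ^ β * (deriv Φ (v ^ 3 / (9 * x)) * (v ^ 3 * (-(9) / (9 * x) ^ 2)))) x := by
    have hcomp : HasDerivAt (fun x' : ℝ => Φ (v ^ 3 / (9 * x')))
        (deriv Φ (v ^ 3 / (9 * x)) * (v ^ 3 * (-(9) / (9 * x) ^ 2))) x :=
      (hΦd (v ^ 3 / (9 * x))).hasDerivAt.comp x hinv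
    have h4 := hrpow.mul hcomp
    simp only [hF]
    exact h4
  have hode' := hode (v ^ 3 / (9 * x))
  rw [iteratedDeriv_succ, iteratedDeriv_one] at hode'
  have hxb : x ^ β = x ^ (β - 1) * x := by
    rw [← Real.rpow_add_one hxne]; ring_nf
  rw [hxd.deriv, h2nd, hxb]
  have hxx : x * x⁻¹ = 1 := mul_inv_cancel₀ hxne
  linear_combination (v * x ^ (β - 1)) * hode' +
    (x ^ (β - 1) * (v ^ 4 * (deriv (deriv Φ) (v ^ 3 / (9 * x))
        - deriv Φ (v ^ 3 / (9 * x))) * x⁻¹ / 9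
      + 2 * v * deriv Φ (v ^ 3 / (9 * x)) / 3)) * hxx
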